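/- arXiv:1910.02434 — 2 statements merged into one kernel-verified Lean document; each statement's English description precedes it below -/
import Mathlib

section
/- Let d ≥ 2 and r > d/2. Let D be a noisy data set with y_i = f*(x_i) + ε_i, ε_i independent, E[ε_i] = 0, |ε_i| ≤ M, whose sampling points are τ-quasi uniform (τ ≥ 2), and f* ∈ W₂^r(S^d). For any n ≤ s (with s the degree of exactness of the quadrature rule with weights 0 ≤ w_{i,s,D} ≤ c₂|D|^{−1}), the filtered hyperinterpolation satisfies E{‖f⋄_{D,n} − f*‖²_{L2(S^d)}} ≤ c₅² n^{−2r} ‖f*‖²_{W₂^r(S^d)} + c₁ c₂² M² n^d / |D|, provided the quadrature rule is exact for polynomials of degree up to 3n − 1, where c₅ is the constant from the filtered hyperinterpolation approximation theorem and c₁ is the constant from the L2-norm bound of the filtered kernel. -/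
open MeasureTheory ProbabilityTheory Real Filter
open scoped BigOperators ENNReal RealInnerProductSpace

noncomputable section

/-- The unit sphere `S^d ⊂ ℝ^{d+1}`. -/
abbrev UnitSphere (d : ℕ) : Type := Metric.sphere (0 : EuclideanSpace ℝ (Fin (d + 1))) 1

/-- Euclidean inner product of two points on the sphere. -/
def sdot {d : ℕ} (x y : UnitSphere d) : ℝ :=
  ⟪(x : EuclideanSpace ℝ (Fin (d + 1))), (y : EuclideanSpace ℝ (Fin (d + 1)))⟫

/-- Geodesic distance on the sphere. -/
def geoDist {d : ℕ} (x y : UnitSphere d) : ℝ := Real.arccos (sdot x y)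

/-- Surface (Lebesgue) measure on `S^d`: the `d`-dimensional Hausdorff measure. -/
def sphereMeasure (d : ℕ) : Measure (UnitSphere d) := μH[d]

/-- Spherical polynomials of degree at most `n`: restrictions to the sphere of
polynomials on `ℝ^{d+1}` of total degree at most `n`. -/
def sphPoly (d n : ℕ) : Set (UnitSphere d → ℝ) :=
  {f | ∃ p : MvPolynomial (Fin (d + 1)) ℝ, p.totalDegree ≤ n ∧
    ∀ x : UnitSphere d, f x = MvPolynomial.eval (fun i => (x : EuclideanSpace ℝ (Fin (d + 1))) i) p}

/-- The space of spherical harmonics of degree `ℓ`: restrictions to the sphere of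
homogeneous harmonic polynomials of degree `ℓ` on `ℝ^{d+1}`. -/
def sphHarmonic (d ℓ : ℕ) : Set (UnitSphere d → ℝ) :=
  {f | ∃ p : MvPolynomial (Fin (d + 1)) ℝ, p.IsHomogeneous ℓ ∧
    (∑ i : Fin (d + 1), MvPolynomial.pderiv i (MvPolynomial.pderiv i p)) = 0 ∧
    ∀ x : UnitSphere d, f x = MvPolynomial.eval (fun i => (x : EuclideanSpace ℝ (Fin (d + 1))) i) p}

/-- A filter of smoothness `κ`: `η ∈ C^κ(ℝ₊)`, `supp η ⊆ [1/2,2]`, and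
`η(t)² + η(2t)² = 1` on `[1/2,1]`. -/
structure IsFilter (η : ℝ → ℝ) (κ : ℕ) : Prop where
  smooth : ContDiffOn ℝ κ η (Set.Ici 0)
  supp : ∀ t : ℝ, 0 ≤ t → t ∉ Set.Icc (1/2 : ℝ) 2 → η t = 0
  partition : ∀ t ∈ Set.Icc (1/2 : ℝ) 1, (η t) ^ 2 + (η (2 * t)) ^ 2 = 1

/-- Gegenbauer polynomials `C_ℓ^λ` via the three-term recurrence. -/
def gegenbauer (lam : ℝ) : ℕ → Polynomial ℝ
  | 0 => 1
  | 1 => Polynomial.C (2 * lam) * Polynomial.X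
  | (n + 2) =>
      Polynomial.C (2 * ((n : ℝ) + 1 + lam) / ((n : ℝ) + 2)) * Polynomial.X *
          gegenbauer lam (n + 1) -
        Polynomial.C (((n : ℝ) + 2 * lam) / ((n : ℝ) + 2)) * gegenbauer lam n

/-- The normalized Gegenbauer polynomial `P_ℓ^{(d+1)}` with `P_ℓ^{(d+1)}(1) = 1`. -/
def normGegenbauer (d ℓ : ℕ) (t : ℝ) : ℝ :=
  (gegenbauer (((d : ℝ) - 1) / 2) ℓ).eval t / (gegenbauer (((d : ℝ) - 1) / 2) ℓ).eval 1

/-- `Z_{d,ℓ}`, the dimension of the space of spherical harmonics of degree `ℓ` on `S^d`. -/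
def harmDim (d ℓ : ℕ) : ℝ :=
  if ℓ = 0 then 1
  else (2 * (ℓ : ℝ) + d - 1) / ((ℓ : ℝ) + d - 1) * (Nat.choose (ℓ + d - 1) ℓ : ℝ)

/-- The volume `|S^d| = 2 π^{(d+1)/2} / Γ((d+1)/2)`. -/
def sphereVol (d : ℕ) : ℝ :=
  2 * Real.pi ^ (((d : ℝ) + 1) / 2) / Real.Gamma (((d : ℝ) + 1) / 2)

/-- The filtered kernel `K_n(t) = Σ_ℓ η(ℓ/n) (Z_{d,ℓ}/|S^d|) P_ℓ^{(d+1)}(t)`. -/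
def filteredKernel (d : ℕ) (η : ℝ → ℝ) (n : ℕ) (t : ℝ) : ℝ :=
  ∑' ℓ : ℕ, η ((ℓ : ℝ) / (n : ℝ)) * (harmDim d ℓ / sphereVol d) * normGegenbauer d ℓ t

/-- Mesh norm (covering radius) of a finite point configuration on the sphere. -/
def meshNorm {d : ℕ} {ι : Type*} [Fintype ι] (x : ι → UnitSphere d) : ℝ :=
  ⨆ y : UnitSphere d, ⨅ i : ι, geoDist y (x i)

/-- Separation radius of a finite point configuration on the sphere. -/
def sepRadius {d : ℕ} {ι : Type*} [Fintype ι] (x : ι → UnitSphere d) : ℝ :=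
  (1 / 2) * ⨅ p : {q : ι × ι // q.1 ≠ q.2}, geoDist (x p.val.1) (x p.val.2)

/-- Mesh ratio `ρ = h/δ ≥ 1`. -/
def meshRatio {d : ℕ} {ι : Type*} [Fintype ι] (x : ι → UnitSphere d) : ℝ :=
  meshNorm x / sepRadius x

/-- `g` is a spherical-harmonic decomposition of `f` witnessing membership of the
Sobolev space `W₂^r(S^d)`. -/
structure SobolevData (d : ℕ) (r : ℝ) (f : UnitSphere d → ℝ) (g : ℕ → UnitSphere d → ℝ) :
    Prop where
  harmonic : ∀ ℓ, g ℓ ∈ sphHarmonic d ℓ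
  hasSum : ∀ x, HasSum (fun ℓ => g ℓ x) (f x)
  summable : Summable (fun ℓ : ℕ =>
    (1 + (ℓ : ℝ) * ((ℓ : ℝ) + d - 1)) ^ r * ∫ x, (g ℓ x) ^ 2 ∂(sphereMeasure d))

/-- The squared Sobolev norm `‖f‖²_{W₂^r}` computed from a harmonic decomposition `g`. -/
def sobNormSq (d : ℕ) (r : ℝ) (g : ℕ → UnitSphere d → ℝ) : ℝ :=
  ∑' ℓ : ℕ, (1 + (ℓ : ℝ) * ((ℓ : ℝ) + d - 1)) ^ r * ∫ x, (g ℓ x) ^ 2 ∂(sphereMeasure d)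

end

noncomputable section
open MeasureTheory Set
open scoped ENNReal NNReal

variable {d : ℕ}

lemma coord_le_norm (x : EuclideanSpace ℝ (Fin (d+1))) (j : Fin (d+1)) : |x j| ≤ ‖x‖ := by
  rw [EuclideanSpace.norm_eq x]
  have h1 : |x j| = Real.sqrt (|x j|^2) := by rw [Real.sqrt_sq_eq_abs, abs_abs]
  rw [h1]
  apply Real.sqrt_le_sqrt
  exact Finset.single_le_sum (f := fun i => |x i|^2) (fun i _ => sq_nonneg _) (Finset.mem_univ j)

lemma nmap_lip : LipschitzOnWith 2 (fun x : EuclideanSpace ℝ (Fin (d+1)) => ‖x‖⁻¹ • x)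
    {x | 1 ≤ ‖x‖} := by
  apply LipschitzOnWith.of_dist_le_mul
  intro x hx y hy
  simp only [Set.mem_setOf_eq] at hx hy
  have hxpos : (0:ℝ) < ‖x‖ := lt_of_lt_of_le one_pos hx
  have hypos : (0:ℝ) < ‖y‖ := lt_of_lt_of_le one_pos hy
  rw [dist_eq_norm, dist_eq_norm]
  have key : ‖x‖⁻¹ • x - ‖y‖⁻¹ • y = ‖x‖⁻¹ • (x - y) + (‖x‖⁻¹ - ‖y‖⁻¹) • y := by
    rw [smul_sub, sub_smul]; abel
  rw [key]
  have habs : |‖y‖ - ‖x‖| ≤ ‖x - y‖ := by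
    rw [abs_sub_comm]; exact abs_norm_sub_norm_le x y
  have h2 : ‖(‖x‖⁻¹ - ‖y‖⁻¹) • y‖ ≤ ‖x - y‖ := by
    have hd : ‖x‖⁻¹ - ‖y‖⁻¹ = (‖y‖ - ‖x‖) / (‖x‖ * ‖y‖) := by field_simp
    rw [norm_smul, Real.norm_eq_abs, hd, abs_div, abs_of_pos (mul_pos hxpos hypos),
      div_mul_eq_mul_div, div_le_iff₀ (mul_pos hxpos hypos)]
    nlinarith [mul_le_mul_of_nonneg_right habs (le_of_lt hypos),
      mul_nonneg (mul_nonneg (norm_nonneg (x - y)) hypos.le) (sub_nonneg.mpr hx)]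
  have h1 : ‖‖x‖⁻¹ • (x - y)‖ ≤ ‖x - y‖ := by
    rw [norm_smul, Real.norm_eq_abs, abs_of_pos (inv_pos.mpr hxpos)]
    calc ‖x‖⁻¹ * ‖x - y‖ ≤ 1 * ‖x - y‖ := by
          apply mul_le_mul_of_nonneg_right _ (norm_nonneg _)
          rw [inv_le_one_iff₀]; right; exact hx
      _ = ‖x - y‖ := one_mul _
  calc ‖‖x‖⁻¹ • (x - y) + (‖x‖⁻¹ - ‖y‖⁻¹) • y‖
      ≤ ‖‖x‖⁻¹ • (x - y)‖ + ‖(‖x‖⁻¹ - ‖y‖⁻¹) • y‖ := norm_add_le _ _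
    _ ≤ ‖x - y‖ + ‖x - y‖ := add_le_add h1 h2
    _ = ((2:ℝ≥0):ℝ) * ‖x - y‖ := by push_cast; ring

def vmap (d : ℕ) (j : Fin (d+1)) (u : Fin d → ℝ) : EuclideanSpace ℝ (Fin (d+1)) :=
  (WithLp.equiv 2 (Fin (d+1) → ℝ)).symm (Fin.insertNth j 1 u)

lemma vmap_lip (j : Fin (d+1)) : LipschitzWith ((d:ℝ≥0)+1) (vmap d j) := by
  apply LipschitzWith.of_dist_le_mul
  intro u u'
  rw [dist_eq_norm]
  have hcoord : ∀ k, |(vmap d j u - vmap d j u') k| ≤ dist u u' := by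
    intro k
    refine Fin.succAboveCases j ?_ ?_ k
    · simp [vmap, WithLp.equiv_symm_apply, PiLp.toLp_apply, Fin.insertNth_apply_same, dist_nonneg]
    · intro i
      simp only [vmap, PiLp.sub_apply, WithLp.equiv_symm_apply, PiLp.toLp_apply,
        Fin.insertNth_apply_succAbove]
      calc |u i - u' i| = dist (u i) (u' i) := (Real.dist_eq _ _).symm
        _ ≤ dist u u' := dist_le_pi_dist u u' i
  have hnorm : ‖vmap d j u - vmap d j u'‖ ≤ Real.sqrt ((d+1) * (dist u u')^2) := by
    rw [EuclideanSpace.norm_eq]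
    apply Real.sqrt_le_sqrt
    calc ∑ k, |(vmap d j u - vmap d j u') k| ^ 2 ≤ ∑ _k : Fin (d+1), (dist u u')^2 :=
          Finset.sum_le_sum fun k _ => by
            have := hcoord k
            have h0 := abs_nonneg ((vmap d j u - vmap d j u') k)
            nlinarith
      _ = (d+1) * (dist u u')^2 := by
          rw [Finset.sum_const, Finset.card_univ, Fintype.card_fin, nsmul_eq_mul]; push_cast; ring
  calc ‖vmap d j u - vmap d j u'‖ ≤ Real.sqrt ((d+1) * (dist u u')^2) := hnorm
    _ ≤ Real.sqrt (((d+1) * dist u u')^2) := by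
        apply Real.sqrt_le_sqrt; have := dist_nonneg (x := u) (y := u'); nlinarith [sq_nonneg (dist u u')]
    _ = (d+1) * dist u u' := by
        rw [Real.sqrt_sq (by positivity)]
    _ = (((d:ℝ≥0)+1):ℝ) * dist u u' := by push_cast; ring

def chart (d : ℕ) (j : Fin (d+1)) (s : Bool) (u : Fin d → ℝ) : EuclideanSpace ℝ (Fin (d+1)) :=
  (if s then (1:ℝ) else -1) • (‖vmap d j u‖⁻¹ • vmap d j u)

lemma one_le_norm_vmap (j : Fin (d+1)) (u : Fin d → ℝ) : 1 ≤ ‖vmap d j u‖ := by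
  have := coord_le_norm (vmap d j u) j
  simp only [vmap, WithLp.equiv_symm_apply, PiLp.toLp_apply, Fin.insertNth_apply_same] at this
  simpa [vmap, WithLp.equiv_symm_apply] using this

lemma chart_lipschitzOn (j : Fin (d+1)) (s : Bool) :
    LipschitzOnWith (2 * ((d:ℝ≥0)+1)) (chart d j s) (Metric.closedBall (0 : Fin d → ℝ) 1) := by
  have hcomp : LipschitzOnWith (2 * ((d:ℝ≥0)+1))
      ((fun x : EuclideanSpace ℝ (Fin (d+1)) => ‖x‖⁻¹ • x) ∘ (vmap d j))
      (Metric.closedBall (0 : Fin d → ℝ) 1) :=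
    nmap_lip.comp ((vmap_lip j).lipschitzOnWith)
      (fun u _ => one_le_norm_vmap j u)
  intro a ha b hb
  have := hcomp ha hb
  simp only [chart, Function.comp] at *
  calc edist ((if s then (1:ℝ) else -1) • (‖vmap d j a‖⁻¹ • vmap d j a))
        ((if s then (1:ℝ) else -1) • (‖vmap d j b‖⁻¹ • vmap d j b))
      = edist (‖vmap d j a‖⁻¹ • vmap d j a) (‖vmap d j b‖⁻¹ • vmap d j b) := by
        rw [edist_nndist, edist_nndist, nndist_eq_nnnorm, nndist_eq_nnnorm, ← smul_sub,
          nnnorm_smul]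
        cases s <;> simp
    _ ≤ _ := this

lemma sphere_subset_charts :
    (Metric.sphere (0 : EuclideanSpace ℝ (Fin (d+1))) 1) ⊆
      ⋃ (j : Fin (d+1)) (s : Bool), chart d j s '' (Metric.closedBall (0 : Fin d → ℝ) 1) := by
  intro z hz
  rw [mem_sphere_zero_iff_norm] at hz
  obtain ⟨j, -, hj⟩ := Finset.exists_max_image (Finset.univ : Finset (Fin (d+1)))
    (fun k => |z k|) ⟨0, Finset.mem_univ 0⟩
  have hzj : z j ≠ 0 := by
    intro h0
    have hall : ∀ k, z k = 0 := by
      intro k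
      have := hj k (Finset.mem_univ k)
      rw [h0] at this
      simpa using abs_nonneg (z k) |>.antisymm' (by simpa using this)
    have : ‖z‖ = 0 := by
      rw [EuclideanSpace.norm_eq]
      simp [hall]
    rw [hz] at this; norm_num at this
  set c := z j with hc
  set u : Fin d → ℝ := fun i => z (j.succAbove i) / c with hu
  have huQ : u ∈ Metric.closedBall (0 : Fin d → ℝ) 1 := by
    rw [Metric.mem_closedBall, dist_zero_right]
    refine (pi_norm_le_iff_of_nonneg zero_le_one).mpr fun i => ?_
    rw [hu, Real.norm_eq_abs, abs_div, div_le_one (abs_pos.mpr hzj)]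
    exact hj (j.succAbove i) (Finset.mem_univ _)
  have hv : vmap d j u = c⁻¹ • z := by
    ext k
    refine Fin.succAboveCases j ?_ ?_ k
    · simp only [vmap, WithLp.equiv_symm_apply, PiLp.toLp_apply, Fin.insertNth_apply_same, PiLp.smul_apply,
        smul_eq_mul]
      field_simp
      exact hc
    · intro i
      simp only [vmap, WithLp.equiv_symm_apply, PiLp.toLp_apply, Fin.insertNth_apply_succAbove, hu,
        PiLp.smul_apply, smul_eq_mul]
      field_simp [mul_comm]
  have hnv : ‖vmap d j u‖ = |c|⁻¹ := by
    rw [hv, norm_smul, hz, Real.norm_eq_abs, abs_inv, mul_one]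
  have hkey : ‖vmap d j u‖⁻¹ • vmap d j u = (|c| / c) • z := by
    rw [hnv, hv, inv_inv, smul_smul, div_eq_mul_inv]
  refine Set.mem_iUnion.mpr ⟨j, Set.mem_iUnion.mpr ⟨decide (0 < c), ⟨u, huQ, ?_⟩⟩⟩
  rcases hzj.lt_or_gt with hneg | hpos
  · have : decide (0 < c) = false := by simp [not_lt.mpr hneg.le]
    rw [chart, this, hkey, abs_of_neg hneg]
    simp only [Bool.false_eq_true, if_false, neg_smul, one_smul, neg_div, neg_neg,
      div_self hzj, one_smul]
  · have : decide (0 < c) = true := by simp [hpos]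
    rw [chart, this, hkey, abs_of_pos hpos]
    simp only [if_true, smul_smul]
    rw [div_self hzj]
    simp

instance sphereFinite (d : ℕ) : IsFiniteMeasure (μH[(d:ℝ)] : Measure (UnitSphere d)) := by
  constructor
  have hiso : μH[(d:ℝ)] (Set.univ : Set (UnitSphere d)) =
      μH[(d:ℝ)] (Metric.sphere (0 : EuclideanSpace ℝ (Fin (d+1))) 1) := by
    rw [← (isometry_subtype_coe).hausdorffMeasure_image (Or.inl (by positivity)) Set.univ]
    rw [Set.image_univ, Subtype.range_coe]
  rw [hiso]
  have hQ : μH[(d:ℝ)] (Metric.closedBall (0 : Fin d → ℝ) 1) < ⊤ := by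
    have : (μH[(d:ℝ)] : Measure (Fin d → ℝ)) = volume := by
      have := hausdorffMeasure_pi_real (ι := Fin d)
      rwa [Fintype.card_fin] at this
    rw [this]
    exact (isCompact_closedBall 0 1).measure_lt_top
  calc μH[(d:ℝ)] (Metric.sphere (0 : EuclideanSpace ℝ (Fin (d+1))) 1)
      ≤ μH[(d:ℝ)] (⋃ (j : Fin (d+1)) (s : Bool),
          chart d j s '' (Metric.closedBall (0 : Fin d → ℝ) 1)) :=
        measure_mono sphere_subset_charts
    _ ≤ ∑' (j : Fin (d+1)), μH[(d:ℝ)] (⋃ (s : Bool),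
          chart d j s '' (Metric.closedBall (0 : Fin d → ℝ) 1)) := measure_iUnion_le _
    _ < ⊤ := by
        rw [tsum_fintype]
        refine ENNReal.sum_lt_top.mpr fun j _ => ?_
        calc μH[(d:ℝ)] (⋃ (s : Bool), chart d j s '' (Metric.closedBall (0 : Fin d → ℝ) 1))
            ≤ ∑' (s : Bool), μH[(d:ℝ)] (chart d j s '' (Metric.closedBall (0 : Fin d → ℝ) 1)) :=
              measure_iUnion_le _
          _ < ⊤ := by
              rw [tsum_bool]
              have hb : ∀ s : Bool,
                  μH[(d:ℝ)] (chart d j s '' (Metric.closedBall (0 : Fin d → ℝ) 1)) < ⊤ := by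
                intro s
                calc μH[(d:ℝ)] (chart d j s '' (Metric.closedBall (0 : Fin d → ℝ) 1))
                    ≤ (2 * ((d:ℝ≥0)+1) : ℝ≥0) ^ (d:ℝ) *
                        μH[(d:ℝ)] (Metric.closedBall (0 : Fin d → ℝ) 1) :=
                      (chart_lipschitzOn j s).hausdorffMeasure_image_le (by positivity)
                  _ < ⊤ := ENNReal.mul_lt_top
                      (ENNReal.rpow_lt_top_of_nonneg (by positivity) ENNReal.coe_ne_top) hQ
              exact ENNReal.add_lt_top.mpr ⟨hb false, hb true⟩

section Helpers
variable {d : ℕ}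

instance : CompactSpace (UnitSphere d) :=
  isCompact_iff_compactSpace.mp (isCompact_sphere 0 1)

instance : IsFiniteMeasure (sphereMeasure d) := by
  unfold sphereMeasure; infer_instance

lemma integrable_of_continuous {φ : UnitSphere d → ℝ} (hφ : Continuous φ) :
    Integrable φ (sphereMeasure d) := by
  obtain ⟨C, hC⟩ := isCompact_univ.exists_bound_of_continuousOn hφ.continuousOn
  exact ⟨hφ.aestronglyMeasurable,
    HasFiniteIntegral.of_bounded (C := C) (Filter.Eventually.of_forall fun y => hC y trivial)⟩

lemma continuous_coe_apply (i : Fin (d+1)) :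
    Continuous fun y : UnitSphere d => (y : EuclideanSpace ℝ (Fin (d+1))) i := by
  exact (continuous_apply i).comp ((PiLp.continuous_ofLp 2 _).comp continuous_subtype_val)

lemma continuous_of_sphHarmonic {ℓ : ℕ} {f : UnitSphere d → ℝ} (hf : f ∈ sphHarmonic d ℓ) :
    Continuous f := by
  obtain ⟨p, -, -, hfx⟩ := hf
  have : f = fun y : UnitSphere d =>
      MvPolynomial.eval (fun i => (y : EuclideanSpace ℝ (Fin (d+1))) i) p := funext hfx
  rw [this]
  have h : Continuous fun y : UnitSphere d => fun i => (y : EuclideanSpace ℝ (Fin (d+1))) i :=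
    continuous_pi fun i => continuous_coe_apply i
  exact (MvPolynomial.continuous_eval p).comp h

lemma measurable_of_sobolev {r : ℝ} {f : UnitSphere d → ℝ} {g : ℕ → UnitSphere d → ℝ}
    (hf : SobolevData d r f g) : Measurable f := by
  apply measurable_of_tendsto_metrizable
    (f := fun m => fun y => ∑ ℓ ∈ Finset.range m, g ℓ y)
  · exact fun m => Finset.measurable_sum _ fun ℓ _ =>
      (continuous_of_sphHarmonic (hf.harmonic ℓ)).measurable
  · rw [tendsto_pi_nhds]
    exact fun y => (hf.hasSum y).tendsto_sum_nat

lemma continuous_kernel {η : ℝ → ℝ} {κ : ℕ} (hη : IsFilter η κ) (n : ℕ) (hn : 1 ≤ n)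
    (x₀ : UnitSphere d) :
    Continuous fun y : UnitSphere d => filteredKernel d η n (sdot x₀ y) := by
  have hker : ∀ t : ℝ, filteredKernel d η n t =
      ∑ ℓ ∈ Finset.range (2*n+1), η ((ℓ:ℝ)/(n:ℝ)) * (harmDim d ℓ / sphereVol d) *
        normGegenbauer d ℓ t := by
    intro t
    apply tsum_eq_sum
    intro ℓ hℓ
    rw [Finset.mem_range, not_lt] at hℓ
    have hnpos : (0:ℝ) < n := by exact_mod_cast hn
    have : (2:ℝ) < (ℓ:ℝ)/(n:ℝ) := by
      rw [lt_div_iff₀ hnpos]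
      have : (2*n+1 : ℝ) ≤ (ℓ:ℝ) := by exact_mod_cast hℓ
      linarith
    rw [hη.supp ((ℓ:ℝ)/(n:ℝ)) (by positivity) (fun hmem => absurd hmem.2 (not_le.mpr this))]
    ring
  simp only [hker]
  apply continuous_finset_sum
  intro ℓ _
  apply Continuous.mul continuous_const
  unfold normGegenbauer
  apply Continuous.div_const
  exact (Polynomial.continuous _).comp (by
    unfold sdot
    exact Continuous.inner continuous_const continuous_subtype_val)

end Helpers

/-- Bias–variance bound (3.6): under a quadrature rule with `0 ≤ w_i ≤ c₂|D|⁻¹` exact for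
degree `3n-1`, with `c₅` the constant of the filtered hyperinterpolation approximation
theorem and `c₁` that of the `L2`-bound of the kernel,
`E‖f⋄_{D,n} - f*‖² ≤ c₅² n^{-2r} ‖f*‖²_{W₂^r} + c₁ c₂² M² n^d / |D|`. -/
theorem stmt_11 (d : ℕ) (hd : 2 ≤ d) (r : ℝ) (hr : (d : ℝ) / 2 < r)
    (τ : ℝ) (hτ : 2 ≤ τ)
    (κ : ℕ) (hκ : (d + 3) / 2 ≤ κ) (η : ℝ → ℝ) (hη : IsFilter η κ)
    (M : ℝ) (hM : 0 ≤ M)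
    -- `c₅`: constant of the filtered hyperinterpolation approximation theorem (Lemma 2.4)
    (c₅ : ℝ) (hc₅pos : 0 < c₅)
    (hc₅ : ∀ (n' N' : ℕ), 1 ≤ n' → ∀ (w' : Fin N' → ℝ) (x' : Fin N' → UnitSphere d),
      (∀ P ∈ sphPoly d (3 * n' - 1),
        ∫ y, P y ∂(sphereMeasure d) = ∑ i, w' i * P (x' i)) →
      ∀ (f : UnitSphere d → ℝ) (g : ℕ → UnitSphere d → ℝ), SobolevData d r f g →
        ∫ y, (f y - ∑ i, w' i * f (x' i) * filteredKernel d η n' (sdot (x' i) y)) ^ 2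
            ∂(sphereMeasure d) ≤
          c₅ ^ 2 * (n' : ℝ) ^ (-(2 * r)) * sobNormSq d r g)
    -- `c₁`: constant of the `L2`-norm bound of the filtered kernel
    (c₁ : ℝ) (hc₁pos : 0 < c₁)
    (hc₁ : ∀ (n' : ℕ), 1 ≤ n' → ∀ x' : UnitSphere d,
      ∫ y, (filteredKernel d η n' (sdot x' y)) ^ 2 ∂(sphereMeasure d) ≤
        c₁ * (n' : ℝ) ^ (d : ℕ))
    (n : ℕ) (hn : 1 ≤ n)
    (N : ℕ) (hN : 2 ≤ N) (x : Fin N → UnitSphere d)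
    (hxinj : Function.Injective x) (hxqu : meshRatio x ≤ τ)
    (c₂ : ℝ) (hc₂pos : 0 < c₂) (w : Fin N → ℝ)
    (hw : ∀ i, 0 ≤ w i ∧ w i ≤ c₂ / (N : ℝ))
    (hexact : ∀ P ∈ sphPoly d (3 * n - 1),
      ∫ y, P y ∂(sphereMeasure d) = ∑ i, w i * P (x i))
    (fstar : UnitSphere d → ℝ) (g : ℕ → UnitSphere d → ℝ) (hfstar : SobolevData d r fstar g)
    (Ω : Type) (mΩ : MeasureSpace Ω) (hprob : IsProbabilityMeasure (ℙ : Measure Ω))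
    (ε : Fin N → Ω → ℝ) (hεmeas : ∀ i, Measurable (ε i))
    (hεindep : ProbabilityTheory.iIndepFun ε ℙ)
    (hεmean : ∀ i, ∫ ω, ε i ω ∂ℙ = 0)
    (hεbdd : ∀ i ω, |ε i ω| ≤ M) :
    ∫ ω, (∫ y,
        ((∑ i, w i * (fstar (x i) + ε i ω) * filteredKernel d η n (sdot (x i) y)) - fstar y) ^ 2
        ∂(sphereMeasure d)) ∂ℙ ≤
      c₅ ^ 2 * (n : ℝ) ^ (-(2 * r)) * sobNormSq d r g +
        c₁ * c₂ ^ 2 * M ^ 2 * (n : ℝ) ^ (d : ℕ) / (N : ℝ) := by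
  classical
  have hNpos : (0:ℝ) < N := by
    have : (2:ℝ) ≤ N := by exact_mod_cast hN
    linarith
  set K : Fin N → UnitSphere d → ℝ :=
    (fun i y => filteredKernel d η n (sdot (x i) y)) with hK
  have hKcont : ∀ i, Continuous (K i) := fun i => continuous_kernel hη n hn (x i)
  have hKint : ∀ i, Integrable (K i) (sphereMeasure d) := fun i =>
    integrable_of_continuous (hKcont i)
  have hKbdd : ∀ i, ∃ C, ∀ y, ‖K i y‖ ≤ C := fun i => by
    obtain ⟨C, hC⟩ := isCompact_univ.exists_bound_of_continuousOn (hKcont i).continuousOn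
    exact ⟨C, fun y => hC y trivial⟩
  have hKK : ∀ i j, Integrable (fun y => K i y * K j y) (sphereMeasure d) := fun i j => by
    obtain ⟨C, hC⟩ := hKbdd i
    exact (hKint j).bdd_mul (c := C) (hKcont i).aestronglyMeasurable (Filter.Eventually.of_forall hC)
  set A : UnitSphere d → ℝ := (fun y => ∑ i, w i * fstar (x i) * K i y) with hA
  have hAcont : Continuous A := continuous_finset_sum _ fun i _ => continuous_const.mul (hKcont i)
  set u : UnitSphere d → ℝ := (fun y => A y - fstar y) with hu
  have hfmeas : Measurable fstar := measurable_of_sobolev hfstar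
  have humeas : Measurable u := hAcont.measurable.sub hfmeas
  set V : Ω → UnitSphere d → ℝ := (fun ω y => ∑ i, w i * ε i ω * K i y) with hV
  have hVcont : ∀ ω, Continuous (V ω) := fun ω =>
    continuous_finset_sum _ fun i _ => continuous_const.mul (hKcont i)
  -- rewrite the integrand
  have hgoal : (fun ω => ∫ y,
        ((∑ i, w i * (fstar (x i) + ε i ω) * filteredKernel d η n (sdot (x i) y)) - fstar y) ^ 2
        ∂(sphereMeasure d)) = fun ω => ∫ y, (u y + V ω y) ^ 2 ∂(sphereMeasure d) := by
    funext ω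
    congr 1
    funext y
    simp only [hu, hA, hV, hK]
    rw [Finset.sum_congr rfl (fun i (_ : i ∈ Finset.univ) =>
      (by ring : w i * (fstar (x i) + ε i ω) * filteredKernel d η n (sdot (x i) y) =
        w i * fstar (x i) * filteredKernel d η n (sdot (x i) y) +
          w i * ε i ω * filteredKernel d η n (sdot (x i) y))), Finset.sum_add_distrib]
    ring
  rw [hgoal]
  -- nonnegativity of the RHS pieces
  have hsob : 0 ≤ sobNormSq d r g := by
    apply tsum_nonneg
    intro ℓ
    apply mul_nonneg _ (integral_nonneg fun y => sq_nonneg _)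
    apply Real.rpow_nonneg
    nlinarith [sq_nonneg (2 * (ℓ:ℝ) - 1), mul_nonneg (Nat.cast_nonneg (α := ℝ) ℓ)
      (Nat.cast_nonneg (α := ℝ) d)]
  have hrhs1 : 0 ≤ c₅ ^ 2 * (n : ℝ) ^ (-(2 * r)) * sobNormSq d r g :=
    mul_nonneg (mul_nonneg (sq_nonneg _) (Real.rpow_nonneg (by positivity) _)) hsob
  have hrhs2 : 0 ≤ c₁ * c₂ ^ 2 * M ^ 2 * (n : ℝ) ^ (d : ℕ) / (N : ℝ) := by positivity
  by_cases hu2 : Integrable (fun y => (u y) ^ 2) (sphereMeasure d)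
  · -- main case
    have humem : MemLp u 2 (sphereMeasure d) :=
      (memLp_two_iff_integrable_sq humeas.aestronglyMeasurable).mpr hu2
    have huint : Integrable u (sphereMeasure d) := humem.integrable one_le_two
    have huK : ∀ i, Integrable (fun y => u y * K i y) (sphereMeasure d) := fun i => by
      obtain ⟨C, hC⟩ := hKbdd i
      have := huint.bdd_mul (hKcont i).aestronglyMeasurable (Filter.Eventually.of_forall hC)
      simpa [mul_comm] using this
    set C0 : ℝ := ∫ y, (u y) ^ 2 ∂(sphereMeasure d) with hC0def
    set cc : Fin N → ℝ := (fun i => ∫ y, u y * K i y ∂(sphereMeasure d)) with hcc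
    set aa : Fin N → Fin N → ℝ :=
      (fun i j => ∫ y, K i y * K j y ∂(sphereMeasure d)) with haa
    -- expansion of the inner integral
    have expand : ∀ ω, ∫ y, (u y + V ω y) ^ 2 ∂(sphereMeasure d) =
        C0 + (∑ i, (2 * w i * cc i) * ε i ω) +
          ∑ p : Fin N × Fin N, (w p.1 * w p.2 * aa p.1 p.2) * (ε p.1 ω * ε p.2 ω) := by
      intro ω
      have hptw : (fun y => (u y + V ω y) ^ 2) = fun y =>
          (u y) ^ 2 + ((∑ i, (2 * (w i * ε i ω)) * (u y * K i y)) +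
            ∑ p : Fin N × Fin N,
              ((w p.1 * ε p.1 ω) * (w p.2 * ε p.2 ω)) * (K p.1 y * K p.2 y)) := by
        funext y
        have hVV : V ω y * V ω y = ∑ p : Fin N × Fin N,
            ((w p.1 * ε p.1 ω) * (w p.2 * ε p.2 ω)) * (K p.1 y * K p.2 y) := by
          have h1 : ∑ p : Fin N × Fin N,
              ((w p.1 * ε p.1 ω) * (w p.2 * ε p.2 ω)) * (K p.1 y * K p.2 y) =
              ∑ i, ∑ j, ((w i * ε i ω) * (w j * ε j ω)) * (K i y * K j y) := by
            rw [← Finset.univ_product_univ, Finset.sum_product]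
          rw [h1, hV, Finset.sum_mul_sum]
          exact Finset.sum_congr rfl fun i _ => Finset.sum_congr rfl fun j _ => by ring
        have hL : 2 * (u y * V ω y) = ∑ i, (2 * (w i * ε i ω)) * (u y * K i y) := by
          rw [hV, Finset.mul_sum, Finset.mul_sum]
          exact Finset.sum_congr rfl fun i _ => by ring
        calc (u y + V ω y) ^ 2 = (u y) ^ 2 + (2 * (u y * V ω y) + V ω y * V ω y) := by ring
          _ = _ := by rw [hVV, hL]
      have int1 : Integrable (fun y => ∑ i, (2 * (w i * ε i ω)) * (u y * K i y))
          (sphereMeasure d) :=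
        integrable_finset_sum _ fun i _ => (huK i).const_mul _
      have int2 : Integrable (fun y => ∑ p : Fin N × Fin N,
          ((w p.1 * ε p.1 ω) * (w p.2 * ε p.2 ω)) * (K p.1 y * K p.2 y)) (sphereMeasure d) :=
        integrable_finset_sum _ fun p _ => (hKK p.1 p.2).const_mul _
      have int12 : Integrable (fun y => (∑ i, (2 * (w i * ε i ω)) * (u y * K i y)) +
          ∑ p : Fin N × Fin N,
            ((w p.1 * ε p.1 ω) * (w p.2 * ε p.2 ω)) * (K p.1 y * K p.2 y)) (sphereMeasure d) :=
        int1.add int2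
      rw [hptw, integral_add hu2 int12, integral_add int1 int2,
        integral_finset_sum _ (fun i _ => (huK i).const_mul _),
        integral_finset_sum _ (fun p _ => (hKK p.1 p.2).const_mul _)]
      simp only [integral_const_mul]
      rw [← hC0def, ← add_assoc]
      congr 1
      · congr 1
        exact Finset.sum_congr rfl fun i _ => by simp only [hcc]; ring
      · exact Finset.sum_congr rfl fun p _ => by simp only [haa]; ring
    simp only [expand]
    -- integrability over Ω
    have hεint : ∀ i, Integrable (ε i) ℙ := fun i =>
      ⟨(hεmeas i).aestronglyMeasurable, HasFiniteIntegral.of_bounded (C := M)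
        (Filter.Eventually.of_forall fun ω => by
          rw [Real.norm_eq_abs]; exact hεbdd i ω)⟩
    have hεεint : ∀ i j, Integrable (fun ω => ε i ω * ε j ω) ℙ := fun i j =>
      ⟨((hεmeas i).mul (hεmeas j)).aestronglyMeasurable,
        HasFiniteIntegral.of_bounded (C := M * M)
        (Filter.Eventually.of_forall fun ω => by
          rw [Real.norm_eq_abs, abs_mul]
          exact mul_le_mul (hεbdd i ω) (hεbdd j ω) (abs_nonneg _) hM)⟩
    have intL : Integrable (fun ω => ∑ i, (2 * w i * cc i) * ε i ω) ℙ :=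
      integrable_finset_sum _ fun i _ => (hεint i).const_mul _
    have intQ : Integrable (fun ω =>
        ∑ p : Fin N × Fin N, (w p.1 * w p.2 * aa p.1 p.2) * (ε p.1 ω * ε p.2 ω)) ℙ :=
      integrable_finset_sum _ fun p _ => (hεεint p.1 p.2).const_mul _
    have intCL : Integrable (fun ω => C0 + ∑ i, (2 * w i * cc i) * ε i ω) ℙ :=
      (integrable_const C0).add intL
    rw [integral_add intCL intQ,
      integral_add (integrable_const C0) intL,
      integral_finset_sum _ (fun i _ => (hεint i).const_mul _),
      integral_finset_sum _ (fun p _ => (hεεint p.1 p.2).const_mul _)]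
    simp only [integral_const_mul, hεmean, mul_zero, Finset.sum_const_zero, add_zero,
      integral_const, measure_univ, probReal_univ, ENNReal.toReal_one, smul_eq_mul, one_mul]
    -- bound the two remaining terms
    have hC0bound : C0 ≤ c₅ ^ 2 * (n : ℝ) ^ (-(2 * r)) * sobNormSq d r g := by
      have hb := hc₅ n N hn w x hexact fstar g hfstar
      have : C0 = ∫ y, (fstar y -
          ∑ i, w i * fstar (x i) * filteredKernel d η n (sdot (x i) y)) ^ 2
          ∂(sphereMeasure d) := by
        rw [hC0def]
        congr 1
        funext y
        simp only [hu, hA, hK]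
        ring
      rw [this]
      exact hb
    have hQbound : ∑ p : Fin N × Fin N, (w p.1 * w p.2 * aa p.1 p.2) *
        (∫ ω, ε p.1 ω * ε p.2 ω ∂ℙ) ≤
        c₁ * c₂ ^ 2 * M ^ 2 * (n : ℝ) ^ (d : ℕ) / (N : ℝ) := by
      have hterm : ∀ p : Fin N × Fin N, (w p.1 * w p.2 * aa p.1 p.2) *
          (∫ ω, ε p.1 ω * ε p.2 ω ∂ℙ) ≤
          if p.1 = p.2 then (c₂ / N) * (c₂ / N) * (c₁ * (n : ℝ) ^ (d : ℕ)) * M ^ 2 else 0 := by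
        intro p
        by_cases hp : p.1 = p.2
        · simp only [hp, if_true]
          obtain ⟨i, j⟩ := p
          simp only at hp
          subst hp
          have haadiag : aa i i ≤ c₁ * (n : ℝ) ^ (d : ℕ) := by
            have := hc₁ n hn (x i)
            simp only [haa]
            calc ∫ y, K i y * K i y ∂(sphereMeasure d) =
                ∫ y, (filteredKernel d η n (sdot (x i) y)) ^ 2 ∂(sphereMeasure d) := by
                  congr 1; funext y; rw [hK]; ring
              _ ≤ c₁ * (n : ℝ) ^ (d : ℕ) := this
          have haann : 0 ≤ aa i i := by
            simp only [haa]; exact integral_nonneg fun y => mul_self_nonneg _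
          have hE2 : ∫ ω, ε i ω * ε i ω ∂ℙ ≤ M ^ 2 := by
            calc ∫ ω, ε i ω * ε i ω ∂ℙ ≤ ∫ _ω, M ^ 2 ∂ℙ := by
                  apply integral_mono (hεεint i i) (integrable_const _)
                  intro ω
                  show ε i ω * ε i ω ≤ M ^ 2
                  have h1 := hεbdd i ω
                  nlinarith [abs_nonneg (ε i ω), le_abs_self (ε i ω), neg_abs_le (ε i ω)]
              _ = M ^ 2 := by simp [integral_const, measure_univ]
          have hE2nn : 0 ≤ ∫ ω, ε i ω * ε i ω ∂ℙ :=
            integral_nonneg fun ω => mul_self_nonneg _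
          have hwi := hw i
          have hww : w i * w i * aa i i ≤ (c₂ / N) * (c₂ / N) * (c₁ * (n : ℝ) ^ (d : ℕ)) := by
            apply mul_le_mul _ haadiag haann (by positivity)
            exact mul_le_mul hwi.2 hwi.2 hwi.1 (by positivity)
          calc w i * w i * aa i i * (∫ ω, ε i ω * ε i ω ∂ℙ) ≤
              (c₂ / N) * (c₂ / N) * (c₁ * (n : ℝ) ^ (d : ℕ)) * (∫ ω, ε i ω * ε i ω ∂ℙ) :=
                mul_le_mul_of_nonneg_right hww hE2nn
            _ ≤ (c₂ / N) * (c₂ / N) * (c₁ * (n : ℝ) ^ (d : ℕ)) * M ^ 2 := by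
                apply mul_le_mul_of_nonneg_left hE2 (by positivity)
        · simp only [hp, if_false]
          have hind := hεindep.indepFun hp
          have hmul := hind.integral_fun_mul_eq_mul_integral (hεint p.1).aestronglyMeasurable (hεint p.2).aestronglyMeasurable
          have : ∫ ω, ε p.1 ω * ε p.2 ω ∂ℙ = (∫ ω, ε p.1 ω ∂ℙ) * ∫ ω, ε p.2 ω ∂ℙ := hmul
          rw [this, hεmean, hεmean, mul_zero, mul_zero]
      calc ∑ p : Fin N × Fin N, (w p.1 * w p.2 * aa p.1 p.2) * (∫ ω, ε p.1 ω * ε p.2 ω ∂ℙ)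
          ≤ ∑ p : Fin N × Fin N,
            (if p.1 = p.2 then (c₂ / N) * (c₂ / N) * (c₁ * (n : ℝ) ^ (d : ℕ)) * M ^ 2 else 0) :=
            Finset.sum_le_sum fun p _ => hterm p
        _ = ∑ _i : Fin N, (c₂ / N) * (c₂ / N) * (c₁ * (n : ℝ) ^ (d : ℕ)) * M ^ 2 := by
            rw [← Finset.univ_product_univ, Finset.sum_product]
            exact Finset.sum_congr rfl fun i _ => by simp
        _ = (N : ℝ) * ((c₂ / N) * (c₂ / N) * (c₁ * (n : ℝ) ^ (d : ℕ)) * M ^ 2) := by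
            rw [Finset.sum_const, Finset.card_univ, Fintype.card_fin, nsmul_eq_mul]
        _ = c₁ * c₂ ^ 2 * M ^ 2 * (n : ℝ) ^ (d : ℕ) / (N : ℝ) := by
            field_simp
            try ring
    exact add_le_add hC0bound hQbound
  · -- degenerate case: the inner integral vanishes
    have hzero : ∀ ω, ∫ y, (u y + V ω y) ^ 2 ∂(sphereMeasure d) = 0 := by
      intro ω
      apply integral_undef
      intro hint
      apply hu2
      have hVmem : MemLp (V ω) 2 (sphereMeasure d) := by
        rw [memLp_two_iff_integrable_sq (hVcont ω).measurable.aestronglyMeasurable]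
        exact integrable_of_continuous ((hVcont ω).pow 2)
      have hmem : MemLp (fun y => u y + V ω y) 2 (sphereMeasure d) :=
        (memLp_two_iff_integrable_sq
          ((humeas.add (hVcont ω).measurable).aestronglyMeasurable)).mpr hint
      have humem : MemLp u 2 (sphereMeasure d) := by
        have h2 := hmem.sub hVmem
        have : (fun y => u y + V ω y) - V ω = u := by
          funext y; simp
        rwa [this] at h2
      exact humem.integrable_sq
    simp only [hzero, integral_zero]
    exact add_nonneg hrhs1 hrhs2
end
end

section
/- Let D be a noisy data set with y_i = f*(x_i) + ε_i, ε_i independent, E[ε_i] = 0, |ε_i| ≤ M, with quadrature weights 0 ≤ w_{i,s,D} ≤ c₂|D|^{−1}. Then the variance term of the filtered hyperinterpolation satisfies ∫_{S^d} E{(f⋄*_{D,n}(x) − f⋄_{D,n}(x))²} dω(x) ≤ c₁ c₂² M² n^d / |D|, where f⋄*_{D,n}(x) = Σ_i w_{i,s,D} f*(x_i) K_n(x_i·x) is the noise-free estimator and c₁ is the constant in the bound ‖K_n(x · ·)‖²_{L2(S^d)} ≤ c₁ n^d. -/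
open MeasureTheory ProbabilityTheory Real Filter
open scoped BigOperators ENNReal RealInnerProductSpace

section Aux
open scoped NNReal

open MeasureTheory

/-- The radial projection is `2`-Lipschitz outside the unit ball. -/
lemma lip_proj {E : Type*} [NormedAddCommGroup E] [NormedSpace ℝ E] :
    LipschitzOnWith 2 (fun x : E => ‖x‖⁻¹ • x) {x | 1 ≤ ‖x‖} := by
  apply LipschitzOnWith.of_dist_le_mul
  intro x hx y hy
  simp only [Set.mem_setOf_eq] at hx hy
  have hx0 : (0:ℝ) < ‖x‖ := lt_of_lt_of_le one_pos hx
  have hy0 : (0:ℝ) < ‖y‖ := lt_of_lt_of_le one_pos hy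
  rw [dist_eq_norm, dist_eq_norm]
  have key : ‖x‖⁻¹ • x - ‖y‖⁻¹ • y = ‖x‖⁻¹ • (x - y) + (‖x‖⁻¹ - ‖y‖⁻¹) • y := by
    rw [smul_sub, sub_smul]; abel
  rw [key]
  have h1 : ‖‖x‖⁻¹ • (x - y)‖ ≤ ‖x - y‖ := by
    rw [norm_smul, norm_inv, norm_norm]
    calc ‖x‖⁻¹ * ‖x - y‖ ≤ 1 * ‖x - y‖ := by
          apply mul_le_mul_of_nonneg_right _ (norm_nonneg _)
          exact inv_le_one_of_one_le₀ hx
      _ = ‖x - y‖ := one_mul _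
  have h2 : ‖(‖x‖⁻¹ - ‖y‖⁻¹) • y‖ ≤ ‖x - y‖ := by
    rw [norm_smul, Real.norm_eq_abs]
    have : ‖x‖⁻¹ - ‖y‖⁻¹ = (‖y‖ - ‖x‖) / (‖x‖ * ‖y‖) := by
      field_simp
    rw [this, abs_div, abs_of_pos (mul_pos hx0 hy0), div_mul_eq_mul_div]
    rw [div_le_iff₀ (mul_pos hx0 hy0)]
    calc |‖y‖ - ‖x‖| * ‖y‖ ≤ ‖x - y‖ * ‖y‖ := by
          apply mul_le_mul_of_nonneg_right _ (norm_nonneg _)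
          rw [abs_sub_comm]
          exact abs_norm_sub_norm_le x y
      _ = ‖x - y‖ * (1 * ‖y‖) := by ring
      _ ≤ ‖x - y‖ * (‖x‖ * ‖y‖) := by
          apply mul_le_mul_of_nonneg_left _ (norm_nonneg _)
          exact mul_le_mul_of_nonneg_right hx (norm_nonneg _)
  calc ‖‖x‖⁻¹ • (x - y) + (‖x‖⁻¹ - ‖y‖⁻¹) • y‖
      ≤ ‖‖x‖⁻¹ • (x - y)‖ + ‖(‖x‖⁻¹ - ‖y‖⁻¹) • y‖ := norm_add_le _ _
    _ ≤ ‖x - y‖ + ‖x - y‖ := add_le_add h1 h2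
    _ = 2 * ‖x - y‖ := by ring

/-- The `d`-dimensional Hausdorff measure of the unit sphere in `ℝ^{d+1}` is finite. -/
lemma sphere_hausdorff_lt_top (d : ℕ) (hd : 1 ≤ d) :
    μH[(d:ℝ)] (Metric.sphere (0 : EuclideanSpace ℝ (Fin (d+1))) 1) < ⊤ := by
  classical
  set E := EuclideanSpace ℝ (Fin (d+1))
  set ι : Fin (d+1) → ℝ → (Fin d → ℝ) → E :=
    fun j a u => (WithLp.equiv 2 (Fin (d+1) → ℝ)).symm (Fin.insertNth j a u) with hι
  set cube : Set (Fin d → ℝ) := Set.pi Set.univ fun _ => Set.Icc (-1:ℝ) 1 with hcube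
  have hιlip : ∀ j a, LipschitzWith (NNReal.sqrt d) (ι j a) := by
    intro j a
    apply LipschitzWith.of_dist_le_mul
    intro u v
    rw [EuclideanSpace.dist_eq]
    simp only [Real.dist_eq, sq_abs]
    have hsum : ∑ i, ((ι j a u) i - (ι j a v) i)^2
        = ∑ k : Fin d, (u k - v k)^2 := by
      rw [Fin.sum_univ_succAbove _ j]
      simp [hι, WithLp.equiv_symm_apply, PiLp.toLp_apply]
    rw [hsum]
    have h1 : ∑ k : Fin d, (u k - v k)^2 ≤ (d : ℝ) * (dist u v)^2 := by
      calc ∑ k : Fin d, (u k - v k)^2 ≤ ∑ _k : Fin d, (dist u v)^2 := by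
            apply Finset.sum_le_sum
            intro k _
            have : |u k - v k| ≤ dist u v := by
              rw [← Real.dist_eq]; exact dist_le_pi_dist u v k
            calc (u k - v k)^2 = |u k - v k|^2 := (sq_abs _).symm
              _ ≤ (dist u v)^2 := by
                  apply pow_le_pow_left₀ (abs_nonneg _) this
        _ = (d : ℝ) * (dist u v)^2 := by simp [mul_comm]
    calc Real.sqrt (∑ k : Fin d, (u k - v k)^2) ≤ Real.sqrt ((d:ℝ) * (dist u v)^2) :=
          Real.sqrt_le_sqrt h1
      _ = Real.sqrt d * dist u v := by
          rw [Real.sqrt_mul (Nat.cast_nonneg d), Real.sqrt_sq dist_nonneg]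
      _ = (NNReal.sqrt d : ℝ) * dist u v := by
          rw [Real.coe_sqrt]; norm_num
  have hmaps : ∀ j (s : Bool), Set.MapsTo (ι j (if s then 1 else -1)) cube {x : E | 1 ≤ ‖x‖} := by
    intro j s u _
    simp only [Set.mem_setOf_eq]
    have h1 : |(ι j (if s then 1 else -1) u) j| ≤ ‖ι j (if s then 1 else -1) u‖ := by
      rw [EuclideanSpace.norm_eq, ← Real.sqrt_sq_eq_abs]
      apply Real.sqrt_le_sqrt
      simp only [Real.norm_eq_abs, sq_abs]
      exact Finset.single_le_sum (f := fun i => (ι j (if s then (1:ℝ) else -1) u i)^2)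
        (fun i _ => sq_nonneg _) (Finset.mem_univ j)
    have h2 : (ι j (if s then 1 else -1) u) j = (if s then (1:ℝ) else -1) := by
      simp [hι, WithLp.equiv_symm_apply, PiLp.toLp_apply]
    rw [h2] at h1
    rcases s with _|_ <;> simpa using h1
  set h : Fin (d+1) → Bool → (Fin d → ℝ) → E :=
    fun j s => (fun x : E => ‖x‖⁻¹ • x) ∘ (ι j (if s then 1 else -1)) with hh
  have hcover : (Metric.sphere (0 : E) 1 : Set E) ⊆
      ⋃ p : Fin (d+1) × Bool, h p.1 p.2 '' cube := by
    intro x hx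
    rw [mem_sphere_zero_iff_norm] at hx
    obtain ⟨j, -, hj⟩ := Finset.exists_max_image Finset.univ (fun i => |x i|) ⟨0, Finset.mem_univ 0⟩
    have hxj : 0 < |x j| := by
      rcases lt_or_ge 0 (|x j|) with h|h
      · exact h
      · exfalso
        have hx0 : ∀ i, x i = 0 := fun i =>
          abs_eq_zero.mp (le_antisymm (le_trans (hj i (Finset.mem_univ i)) h) (abs_nonneg _))
        have hxz : x = 0 := by
          ext i; simpa using hx0 i
        rw [hxz] at hx; simp at hx
    set c := |x j| with hc
    set s : Bool := decide (0 < x j) with hs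
    set u : Fin d → ℝ := fun k => x (j.succAbove k) / c with hu
    have hucube : u ∈ cube := by
      intro k _
      simp only [Set.mem_Icc]
      constructor
      · rw [le_div_iff₀ hxj]
        have := (hj (j.succAbove k) (Finset.mem_univ _))
        nlinarith [abs_nonneg (x (j.succAbove k)), neg_abs_le (x (j.succAbove k))]
      · rw [div_le_one hxj]
        calc x (j.succAbove k) ≤ |x (j.succAbove k)| := le_abs_self _
          _ ≤ c := hj _ (Finset.mem_univ _)
    refine Set.mem_iUnion.2 ⟨⟨j, s⟩, ⟨u, hucube, ?_⟩⟩
    have hιx : ι j (if s then 1 else -1) u = c⁻¹ • x := by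
      have key : Fin.insertNth j (if s then (1:ℝ) else -1) u = fun i => c⁻¹ * x i := by
        rw [Fin.insertNth_eq_iff]
        constructor
        · rcases lt_trichotomy (x j) 0 with h|h|h
          · have hsf : s = false := by simp [hs, h.not_gt]
            rw [hsf]
            simp only [if_neg Bool.false_ne_true]
            rw [hc, abs_of_neg h, ← neg_inv, neg_mul, inv_mul_cancel₀ (ne_of_lt h)]
          · exfalso; rw [hc, h] at hxj; simp at hxj
          · have hst : s = true := by simp [hs, h]
            rw [hst]
            simp only [if_pos rfl, ↓reduceIte]
            rw [hc, abs_of_pos h]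
            field_simp
        · funext k
          simp [Fin.removeNth, hu, div_eq_inv_mul]
      ext i
      change _ = c⁻¹ * x i
      simpa [hι, WithLp.equiv_symm_apply, PiLp.toLp_apply] using congrFun key i
    rw [hh]
    simp only [Function.comp_apply]
    rw [hιx]
    have hc0 : (0:ℝ) < c⁻¹ := inv_pos.2 hxj
    rw [norm_smul, Real.norm_eq_abs, abs_of_pos hc0, hx, mul_one, inv_inv, smul_smul,
      mul_inv_cancel₀ (ne_of_gt hxj), one_smul]
  have himage : ∀ p : Fin (d+1) × Bool, μH[(d:ℝ)] (h p.1 p.2 '' cube) < ⊤ := by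
    intro ⟨j, s⟩
    have hlip : LipschitzOnWith (2 * NNReal.sqrt d) (h j s) cube :=
      LipschitzOnWith.comp (lip_proj.mono (by exact fun x hx => hx))
        ((hιlip j _).lipschitzOnWith) (hmaps j s)
    calc μH[(d:ℝ)] (h j s '' cube) ≤ ((2 * NNReal.sqrt d : ℝ≥0) : ℝ≥0∞) ^ (d:ℝ) * μH[(d:ℝ)] cube :=
          hlip.hausdorffMeasure_image_le (Nat.cast_nonneg d)
      _ < ⊤ := by
          apply ENNReal.mul_lt_top
          · exact ENNReal.rpow_lt_top_of_nonneg (Nat.cast_nonneg d) ENNReal.coe_ne_top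
          · have : μH[(d:ℝ)] cube = volume cube := by
              have : ((d:ℝ)) = ((Fintype.card (Fin d) : ℕ) : ℝ) := by simp
              rw [this, hausdorffMeasure_pi_real]
            rw [this, hcube, volume_pi_pi]
            simp only [Real.volume_Icc]
            norm_num
  calc μH[(d:ℝ)] (Metric.sphere (0 : E) 1 : Set E)
      ≤ μH[(d:ℝ)] (⋃ p : Fin (d+1) × Bool, h p.1 p.2 '' cube) := measure_mono hcover
    _ ≤ ∑' p : Fin (d+1) × Bool, μH[(d:ℝ)] (h p.1 p.2 '' cube) := measure_iUnion_le _
    _ < ⊤ := by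
        rw [tsum_fintype]
        exact ENNReal.sum_lt_top.2 fun p _ => himage p

/-- The surface measure on the sphere is finite. -/
lemma sphereMeasure_finite (d : ℕ) (hd : 1 ≤ d) : IsFiniteMeasure (sphereMeasure d) := by
  constructor
  rw [sphereMeasure]
  have h1 : μH[(d:ℝ)] (Set.univ : Set (UnitSphere d)) =
      μH[(d:ℝ)] (((↑) : UnitSphere d → EuclideanSpace ℝ (Fin (d+1))) '' Set.univ) :=
    (isometry_subtype_coe.hausdorffMeasure_image (Or.inl (Nat.cast_nonneg d)) _).symm
  rw [h1, Set.image_univ, Subtype.range_coe]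
  exact sphere_hausdorff_lt_top d hd

lemma filteredKernel_eq_sum (d : ℕ) {η : ℝ → ℝ} {κ : ℕ} (hη : IsFilter η κ)
    (n : ℕ) (hn : 1 ≤ n) (t : ℝ) :
    filteredKernel d η n t = ∑ ℓ ∈ Finset.range (2*n+1),
      η ((ℓ : ℝ) / (n : ℝ)) * (harmDim d ℓ / sphereVol d) * normGegenbauer d ℓ t := by
  apply tsum_eq_sum
  intro ℓ hℓ
  have hℓ' : 2*n+1 ≤ ℓ := by simpa [Finset.mem_range, not_lt] using hℓ
  have hn0 : (0:ℝ) < n := by exact_mod_cast Nat.lt_of_lt_of_le Nat.zero_lt_one hn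
  have h2 : (2:ℝ) < (ℓ:ℝ)/(n:ℝ) := by
    rw [lt_div_iff₀ hn0]
    have : (2*n+1 : ℝ) ≤ (ℓ : ℝ) := by exact_mod_cast hℓ'
    linarith
  have hz : η ((ℓ:ℝ)/(n:ℝ)) = 0 := by
    apply hη.supp _ (by positivity)
    intro hmem
    exact absurd hmem.2 (not_le.2 h2)
  rw [hz, zero_mul, zero_mul]

lemma filteredKernel_continuous (d : ℕ) {η : ℝ → ℝ} {κ : ℕ} (hη : IsFilter η κ)
    (n : ℕ) (hn : 1 ≤ n) :
    Continuous fun t => filteredKernel d η n t := by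
  have heq : (fun t => filteredKernel d η n t) = fun t => ∑ ℓ ∈ Finset.range (2*n+1),
      η ((ℓ : ℝ) / (n : ℝ)) * (harmDim d ℓ / sphereVol d) * normGegenbauer d ℓ t :=
    funext (filteredKernel_eq_sum d hη n hn)
  rw [heq]
  apply continuous_finset_sum
  intro ℓ _
  have hP : Continuous (normGegenbauer d ℓ) := by
    unfold normGegenbauer
    exact ((gegenbauer (((d : ℝ) - 1) / 2) ℓ).continuous).div_const _
  exact continuous_const.mul hP

end Aux

/-- Variance bound for the filtered hyperinterpolation with deterministic sampling:
if `0 ≤ w_{i,s,D} ≤ c₂ |D|⁻¹` and `‖K_n(x·)‖²_{L2(S^d)} ≤ c₁ n^d`, then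
`∫ E{(f⋄*_{D,n}(x) - f⋄_{D,n}(x))²} dω(x) ≤ c₁ c₂² M² n^d / |D|`. -/
theorem stmt_12 (d : ℕ) (hd : 2 ≤ d) (κ : ℕ) (η : ℝ → ℝ) (hη : IsFilter η κ)
    (n : ℕ) (hn : 1 ≤ n)
    (c₁ : ℝ) (hc₁pos : 0 < c₁)
    (hc₁ : ∀ x : UnitSphere d,
      ∫ y, (filteredKernel d η n (sdot x y)) ^ 2 ∂(sphereMeasure d) ≤ c₁ * (n : ℝ) ^ (d : ℕ))
    (N : ℕ) (hN : 1 ≤ N) (x : Fin N → UnitSphere d)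
    (c₂ : ℝ) (hc₂pos : 0 < c₂) (w : Fin N → ℝ)
    (hw : ∀ i, 0 ≤ w i ∧ w i ≤ c₂ / (N : ℝ))
    (fstar : UnitSphere d → ℝ) (hfstar : Continuous fstar)
    (Ω : Type) (mΩ : MeasureSpace Ω) (hprob : IsProbabilityMeasure (ℙ : Measure Ω))
    (ε : Fin N → Ω → ℝ) (hεmeas : ∀ i, Measurable (ε i))
    (hεindep : ProbabilityTheory.iIndepFun ε ℙ)
    (hεmean : ∀ i, ∫ ω, ε i ω ∂ℙ = 0)
    (M : ℝ) (hεbdd : ∀ i ω, |ε i ω| ≤ M)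
    (F : Ω → UnitSphere d → ℝ) (Fstar : UnitSphere d → ℝ)
    (hF : ∀ ω y, F ω y = ∑ i, w i * (fstar (x i) + ε i ω) * filteredKernel d η n (sdot (x i) y))
    (hFstar : ∀ y, Fstar y = ∑ i, w i * fstar (x i) * filteredKernel d η n (sdot (x i) y)) :
    ∫ y, (∫ ω, (Fstar y - F ω y) ^ 2 ∂ℙ) ∂(sphereMeasure d) ≤
      c₁ * c₂ ^ 2 * M ^ 2 * (n : ℝ) ^ (d : ℕ) / (N : ℝ) :=  by
  haveI := hprob
  haveI : IsFiniteMeasure (sphereMeasure d) := sphereMeasure_finite d (le_trans (by norm_num) hd)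
  have hNpos : (0:ℝ) < (N:ℝ) := by exact_mod_cast Nat.lt_of_lt_of_le Nat.zero_lt_one hN
  have hΩ : Nonempty Ω := by
    by_contra hc
    rw [not_nonempty_iff] at hc
    have h1 := hprob.measure_univ
    rw [Set.univ_eq_empty_iff.mpr hc, measure_empty] at h1
    exact zero_ne_one h1
  obtain ⟨ω₀⟩ := hΩ
  have hM : 0 ≤ M := le_trans (abs_nonneg _) (hεbdd ⟨0, hN⟩ ω₀)
  set K : Fin N → UnitSphere d → ℝ := fun i y => filteredKernel d η n (sdot (x i) y) with hKdef
  have hKcont : ∀ i, Continuous (K i) := by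
    intro i
    apply (filteredKernel_continuous d hη n hn).comp
    unfold sdot
    exact Continuous.inner continuous_const continuous_subtype_val
  have hεint : ∀ i, Integrable (ε i) ℙ := fun i =>
    (integrable_const M).mono' (hεmeas i).aestronglyMeasurable
      (Filter.Eventually.of_forall fun ω => by simpa using hεbdd i ω)
  have hεsqint : ∀ i j, Integrable (fun ω => ε i ω * ε j ω) ℙ := fun i j =>
    (integrable_const (M * M)).mono' ((hεmeas i).mul (hεmeas j)).aestronglyMeasurable
      (Filter.Eventually.of_forall fun ω => by
        rw [norm_mul, Real.norm_eq_abs, Real.norm_eq_abs]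
        exact mul_le_mul (hεbdd i ω) (hεbdd j ω) (abs_nonneg _) hM)
  have inner_bound : ∀ y, (∫ ω, (Fstar y - F ω y)^2 ∂ℙ) ≤ M^2 * ∑ i, (w i)^2 * (K i y)^2 := by
    intro y
    have hdiff : ∀ ω, Fstar y - F ω y = -∑ i, (w i * K i y) * ε i ω := by
      intro ω
      rw [hFstar y, hF ω y, ← Finset.sum_sub_distrib]
      rw [show ∑ i, (w i * fstar (x i) * filteredKernel d η n (sdot (x i) y) -
          w i * (fstar (x i) + ε i ω) * filteredKernel d η n (sdot (x i) y))
          = ∑ i, -((w i * K i y) * ε i ω) from Finset.sum_congr rfl fun i _ => by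
            simp only [hKdef]; ring]
      rw [Finset.sum_neg_distrib]
    have hsq : ∀ ω, (Fstar y - F ω y)^2
        = ∑ i, ∑ j, (w i * K i y) * (w j * K j y) * (ε i ω * ε j ω) := by
      intro ω
      rw [hdiff ω, neg_sq, sq, Finset.sum_mul_sum]
      exact Finset.sum_congr rfl fun i _ => Finset.sum_congr rfl fun j _ => by ring
    have hintsum : ∫ ω, (Fstar y - F ω y)^2 ∂ℙ
        = ∑ i, ∑ j, (w i * K i y) * (w j * K j y) * ∫ ω, ε i ω * ε j ω ∂ℙ := by
      rw [integral_congr_ae (Filter.Eventually.of_forall hsq)]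
      rw [integral_finset_sum _ (fun i _ =>
        integrable_finset_sum _ (fun j _ => (hεsqint i j).const_mul _))]
      refine Finset.sum_congr rfl fun i _ => ?_
      rw [integral_finset_sum _ (fun j _ => (hεsqint i j).const_mul _)]
      exact Finset.sum_congr rfl fun j _ => integral_const_mul _ _
    have hcross : ∀ i j, i ≠ j → (∫ ω, ε i ω * ε j ω ∂ℙ) = 0 := by
      intro i j hij
      have h1 := ProbabilityTheory.IndepFun.integral_fun_mul_eq_mul_integral (hεindep.indepFun hij)
        (hεint i).aestronglyMeasurable (hεint j).aestronglyMeasurable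
      rw [hεmean i, hεmean j, mul_zero] at h1
      exact h1
    have hdiag : ∀ i, (∫ ω, ε i ω * ε i ω ∂ℙ) ≤ M^2 := by
      intro i
      calc (∫ ω, ε i ω * ε i ω ∂ℙ) ≤ ∫ _ω, M^2 ∂ℙ := by
            apply integral_mono (hεsqint i i) (integrable_const _)
            intro ω
            calc ε i ω * ε i ω = |ε i ω| * |ε i ω| := (abs_mul_abs_self _).symm
              _ ≤ M * M := mul_le_mul (hεbdd i ω) (hεbdd i ω) (abs_nonneg _) hM
              _ = M^2 := (sq M).symm
        _ = M^2 := by simp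
    rw [hintsum]
    have hstep : ∀ i : Fin N,
        (∑ j, (w i * K i y) * (w j * K j y) * ∫ ω, ε i ω * ε j ω ∂ℙ)
          ≤ (w i)^2 * (K i y)^2 * M^2 := by
      intro i
      rw [Finset.sum_eq_single i (fun j _ hji => by
          rw [hcross i j (Ne.symm hji), mul_zero]) (fun hi => absurd (Finset.mem_univ i) hi)]
      calc (w i * K i y) * (w i * K i y) * ∫ ω, ε i ω * ε i ω ∂ℙ
          ≤ (w i * K i y) * (w i * K i y) * M^2 := by
            apply mul_le_mul_of_nonneg_left (hdiag i)
            exact mul_self_nonneg _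
        _ = (w i)^2 * (K i y)^2 * M^2 := by ring
    calc (∑ i, ∑ j, (w i * K i y) * (w j * K j y) * ∫ ω, ε i ω * ε j ω ∂ℙ)
        ≤ ∑ i, (w i)^2 * (K i y)^2 * M^2 := Finset.sum_le_sum fun i _ => hstep i
      _ = M^2 * ∑ i, (w i)^2 * (K i y)^2 := by
          rw [Finset.mul_sum]; exact Finset.sum_congr rfl fun i _ => by ring
  have hKint : ∀ i, Integrable (fun y => (K i y)^2) (sphereMeasure d) := by
    intro i
    have hc : Continuous fun y => (K i y)^2 := (hKcont i).pow 2
    exact hc.integrable_of_hasCompactSupport (isClosed_tsupport _).isCompact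
  have hgint : Integrable (fun y => M^2 * ∑ i, (w i)^2 * (K i y)^2) (sphereMeasure d) :=
    ((integrable_finset_sum _ fun i _ => ((hKint i).const_mul _)).const_mul _)
  have h1 : (∫ y, (∫ ω, (Fstar y - F ω y)^2 ∂ℙ) ∂(sphereMeasure d))
      ≤ ∫ y, M^2 * ∑ i, (w i)^2 * (K i y)^2 ∂(sphereMeasure d) :=
    integral_mono_of_nonneg
      (Filter.Eventually.of_forall fun y => integral_nonneg fun ω => sq_nonneg _)
      hgint (Filter.Eventually.of_forall inner_bound)
  have h2 : (∫ y, M^2 * ∑ i, (w i)^2 * (K i y)^2 ∂(sphereMeasure d))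
      = M^2 * ∑ i, (w i)^2 * ∫ y, (K i y)^2 ∂(sphereMeasure d) := by
    rw [integral_const_mul, integral_finset_sum _ (fun i _ => (hKint i).const_mul _)]
    congr 1
    exact Finset.sum_congr rfl fun i _ => integral_const_mul _ _
  have h3 : M^2 * ∑ i, (w i)^2 * ∫ y, (K i y)^2 ∂(sphereMeasure d)
      ≤ M^2 * ((N:ℝ) * ((c₂ / N)^2 * (c₁ * (n:ℝ)^(d:ℕ)))) := by
    apply mul_le_mul_of_nonneg_left _ (sq_nonneg M)
    calc (∑ i, (w i)^2 * ∫ y, (K i y)^2 ∂(sphereMeasure d))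
        ≤ ∑ _i : Fin N, (c₂ / N)^2 * (c₁ * (n:ℝ)^(d:ℕ)) := by
          apply Finset.sum_le_sum
          intro i _
          apply mul_le_mul
          · exact pow_le_pow_left₀ (hw i).1 (hw i).2 2
          · exact hc₁ (x i)
          · exact integral_nonneg fun y => sq_nonneg _
          · positivity
      _ = (N:ℝ) * ((c₂ / N)^2 * (c₁ * (n:ℝ)^(d:ℕ))) := by
          rw [Finset.sum_const, Finset.card_univ, Fintype.card_fin, nsmul_eq_mul]
  have h4 : M^2 * ((N:ℝ) * ((c₂ / N)^2 * (c₁ * (n:ℝ)^(d:ℕ))))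
      = c₁ * c₂ ^ 2 * M ^ 2 * (n : ℝ) ^ (d : ℕ) / (N : ℝ) := by
    field_simp
  linarith [h1, h2 ▸ h1, h3]
end
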